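/- In the Black-Scholes model, the Malliavin/likelihood-ratio Gamma weight identity holds: e^{-rT} E[(X_T-K)⁺ ((Z²-1)/(X₀²σ²T) - Z/(X₀²σ√T))] equals ∂²/∂X₀² of e^{-rT}E[(X_T-K)⁺], where X_T = X₀ exp((r-σ²/2)T + σ√T Z). -/

import Mathlib

open MeasureTheory ProbabilityTheory Real Metric
open scoped ENNReal NNReal

noncomputable def npdf (t : ℝ) : ℝ := (Real.sqrt (2*π))⁻¹ * Real.exp (-t^2/2)

lemma npdf_nonneg (t : ℝ) : 0 ≤ npdf t := by
  unfold npdf; positivity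

lemma npdf_cont : Continuous npdf := by
  unfold npdf; fun_prop

lemma hasDerivAt_npdf (t : ℝ) : HasDerivAt npdf (-t * npdf t) t := by
  have h1 : HasDerivAt (fun t : ℝ => -t^2/2) (-t) t := by
    have := ((hasDerivAt_pow 2 t).neg).div_const 2
    exact this.congr_deriv (by norm_num; ring)
  have h2 := (h1.exp).const_mul (Real.sqrt (2*π))⁻¹
  exact h2.congr_deriv (by unfold npdf; ring)

lemma sq_add_one_le (t : ℝ) : t^2 + 1 ≤ 4 * Real.exp |t| := by
  have h := Real.add_one_le_exp (|t|/2)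
  have h2 : (|t|/2 + 1)^2 ≤ Real.exp |t| := by
    have hnn : 0 ≤ |t|/2 + 1 := by positivity
    calc (|t|/2 + 1)^2 ≤ (Real.exp (|t|/2))^2 := by
            exact pow_le_pow_left₀ hnn h 2
      _ = Real.exp |t| := by
            rw [sq, ← Real.exp_add]; congr 1; ring
  nlinarith [abs_nonneg t, sq_abs t]

lemma key_bound {δ w : ℝ} (hδ : |δ| ≤ 1) :
    ((w+δ)^2 + 1) * Real.exp (-(w+δ)^2/2) ≤ 11 * Real.exp (3*|w| - w^2/2) := by
  have h4 := sq_add_one_le (w+δ)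
  have hexp : |w+δ| + (-(w+δ)^2/2) ≤ 1 + (3*|w| - w^2/2) := by
    have h1 : |w+δ| ≤ |w| + 1 := (abs_add_le _ _).trans (by linarith)
    have h2 : w^2 - 2*|w| ≤ (w+δ)^2 := by
      nlinarith [neg_abs_le (w*δ), abs_mul w δ, abs_nonneg w, abs_nonneg δ, sq_nonneg δ,
        mul_le_mul_of_nonneg_left hδ (abs_nonneg w)]
    linarith [abs_nonneg w]
  calc ((w+δ)^2 + 1) * Real.exp (-(w+δ)^2/2)
      ≤ 4 * Real.exp |w+δ| * Real.exp (-(w+δ)^2/2) := by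
        exact mul_le_mul_of_nonneg_right h4 (Real.exp_nonneg _)
    _ = 4 * Real.exp (|w+δ| + (-(w+δ)^2/2)) := by rw [Real.exp_add]; ring
    _ ≤ 4 * Real.exp (1 + (3*|w| - w^2/2)) := by
        have := Real.exp_le_exp.mpr hexp
        linarith
    _ = 4 * Real.exp 1 * Real.exp (3*|w| - w^2/2) := by rw [Real.exp_add]; ring
    _ ≤ 11 * Real.exp (3*|w| - w^2/2) := by
        have h1 : Real.exp 1 < 2.7182818286 := Real.exp_one_lt_d9
        have := Real.exp_nonneg (3*|w| - w^2/2)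
        nlinarith

lemma integrable_exp_quad (a b d c : ℝ) :
    Integrable (fun u : ℝ => Real.exp (a + b*u + d*|u-c| - (u-c)^2/2)) := by
  have key : Integrable (fun w : ℝ => Real.exp (a + b*(w+c) + d*|w| - w^2/2)) := by
    set M := |b| + |d| with hM
    refine Integrable.mono' (g := fun w => Real.exp (a + b*c + M^2) * Real.exp (-(4:ℝ)⁻¹ * w^2))
      ((integrable_exp_neg_mul_sq (by norm_num)).const_mul _) ?_ ?_
    · apply Continuous.aestronglyMeasurable; fun_prop
    · refine ae_of_all _ fun w => ?_
      rw [Real.norm_eq_abs, abs_of_pos (Real.exp_pos _), ← Real.exp_add]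
      apply Real.exp_le_exp.mpr
      have h1 : b*w ≤ |b| * |w| := by
        calc b*w ≤ |b*w| := le_abs_self _
          _ = |b| * |w| := abs_mul b w
      have h2 : d*|w| ≤ |d| * |w| := by
        have : d ≤ |d| := le_abs_self d
        nlinarith [abs_nonneg w]
      have h3 : M * |w| ≤ w^2/4 + M^2 := by
        nlinarith [sq_nonneg (|w|/2 - M), sq_abs w]
      have hMnn : 0 ≤ M := by positivity
      nlinarith [sq_abs w]
  have := key.comp_sub_right c
  convert this using 2 with u
  ring_nf

lemma npdf_eq : npdf = gaussianPDFReal 0 1 := by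
  ext t
  simp [npdf, gaussianPDFReal]

lemma integral_gaussian_density (g : ℝ → ℝ) :
    ∫ z, g z ∂(gaussianReal 0 1) = ∫ z, npdf z * g z := by
  rw [gaussianReal_of_var_ne_zero 0 one_ne_zero]
  have : gaussianPDF 0 1 = fun x => ((gaussianPDFReal 0 1 x).toNNReal : ℝ≥0∞) := rfl
  rw [this, integral_withDensity_eq_integral_smul
    (measurable_gaussianPDFReal 0 1).real_toNNReal g]
  congr 1
  ext z
  rw [NNReal.smul_def, Real.coe_toNNReal _ (gaussianPDFReal_nonneg 0 1 z)]
  rw [npdf_eq]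
  rfl

noncomputable def gg (m s K : ℝ) (u : ℝ) : ℝ := max (Real.exp (m + s*u) - K) 0

lemma gg_cont (m s K : ℝ) : Continuous (gg m s K) := by
  unfold gg; fun_prop

lemma gg_nonneg (m s K u : ℝ) : 0 ≤ gg m s K u := le_max_right _ _

lemma gg_le (m s : ℝ) {K : ℝ} (hK : 0 ≤ K) (u : ℝ) : gg m s K u ≤ Real.exp (m + s*u) :=
  max_le (by linarith) (Real.exp_nonneg _)

noncomputable def F0 (m s K c : ℝ) : ℝ := ∫ u, gg m s K u * npdf (u - c)
noncomputable def F1 (m s K c : ℝ) : ℝ := ∫ u, gg m s K u * ((u - c) * npdf (u - c))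
noncomputable def F2 (m s K c : ℝ) : ℝ :=
  ∫ u, gg m s K u * (((u - c)^2 - 1) * npdf (u - c))

lemma npdf_le (t : ℝ) : npdf t ≤ (Real.sqrt (2*π))⁻¹ * Real.exp (-t^2/2) := le_refl _

-- master bound: for |c - c₀| ≤ 1,
lemma master_bound (m s : ℝ) {K : ℝ} (hK : 0 ≤ K) {c₀ c : ℝ} (hc : |c - c₀| ≤ 1) (u : ℝ) :
    gg m s K u * (((u-c)^2 + 1) * npdf (u - c))
      ≤ (Real.sqrt (2*π))⁻¹ * 11 * Real.exp (m + s*u + 3*|u-c₀| - (u-c₀)^2/2) := by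
  have h1 : ((u-c)^2 + 1) * npdf (u-c)
      ≤ (Real.sqrt (2*π))⁻¹ * (11 * Real.exp (3*|u-c₀| - (u-c₀)^2/2)) := by
    have hkb := key_bound (δ := c₀ - c) (w := u - c₀) (by rw [abs_sub_comm]; exact hc)
    have he : u - c₀ + (c₀ - c) = u - c := by ring
    rw [he] at hkb
    unfold npdf
    have hs : (0:ℝ) ≤ (Real.sqrt (2*π))⁻¹ := by positivity
    calc ((u-c)^2 + 1) * ((Real.sqrt (2*π))⁻¹ * Real.exp (-(u-c)^2/2))
        = (Real.sqrt (2*π))⁻¹ * (((u-c)^2 + 1) * Real.exp (-(u-c)^2/2)) := by ring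
      _ ≤ _ := by exact mul_le_mul_of_nonneg_left hkb hs
  have h2 := gg_le m s hK u
  have hg := gg_nonneg m s K u
  have hnn : 0 ≤ ((u-c)^2 + 1) * npdf (u-c) := mul_nonneg (by positivity) (npdf_nonneg _)
  calc gg m s K u * (((u-c)^2 + 1) * npdf (u - c))
      ≤ Real.exp (m + s*u) * ((Real.sqrt (2*π))⁻¹ * (11 * Real.exp (3*|u-c₀| - (u-c₀)^2/2))) := by
        apply mul_le_mul h2 h1 hnn (Real.exp_nonneg _)
    _ = (Real.sqrt (2*π))⁻¹ * 11 * (Real.exp (m + s*u) * Real.exp (3*|u-c₀| - (u-c₀)^2/2)) := by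
        ring
    _ = (Real.sqrt (2*π))⁻¹ * 11 * Real.exp (m + s*u + 3*|u-c₀| - (u-c₀)^2/2) := by
        rw [← Real.exp_add]; ring_nf

lemma integrable_master (m s c₀ : ℝ) :
    Integrable (fun u => (Real.sqrt (2*π))⁻¹ * 11 * Real.exp (m + s*u + 3*|u-c₀| - (u-c₀)^2/2)) :=
  (integrable_exp_quad m s 3 c₀).const_mul _

lemma integrable_F0 (m s : ℝ) {K : ℝ} (hK : 0 ≤ K) (c : ℝ) :
    Integrable (fun u => gg m s K u * npdf (u - c)) := by
  refine (integrable_master m s c).mono' ?_ (ae_of_all _ fun u => ?_)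
  · exact ((gg_cont m s K).mul (npdf_cont.comp (by fun_prop))).aestronglyMeasurable
  · have hg := gg_nonneg m s K u
    have hn := npdf_nonneg (u - c)
    rw [Real.norm_eq_abs, abs_of_nonneg (by positivity)]
    calc gg m s K u * npdf (u - c) ≤ gg m s K u * (((u-c)^2 + 1) * npdf (u - c)) := by
          nlinarith [mul_nonneg (mul_nonneg hg hn) (sq_nonneg (u-c))]
      _ ≤ _ := master_bound m s hK (by simp) u

lemma hasDerivAt_F0 (m s : ℝ) {K : ℝ} (hK : 0 ≤ K) (c : ℝ) :
    Integrable (fun u => gg m s K u * ((u - c) * npdf (u - c)))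
      ∧ HasDerivAt (F0 m s K) (F1 m s K c) c := by
  have H := hasDerivAt_integral_of_dominated_loc_of_deriv_le
    (F := fun c u => gg m s K u * npdf (u - c))
    (F' := fun c u => gg m s K u * ((u - c) * npdf (u - c)))
    (x₀ := c) (s := ball c 1)
    (bound := fun u => (Real.sqrt (2*π))⁻¹ * 11 * Real.exp (m + s*u + 3*|u-c|^1 - (u-c)^2/2))
    (ball_mem_nhds c one_pos)
    (Filter.Eventually.of_forall fun c' =>
      ((gg_cont m s K).mul (npdf_cont.comp (by fun_prop))).aestronglyMeasurable)
    (integrable_F0 m s hK c)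
    (((gg_cont m s K).mul ((continuous_id.sub continuous_const).mul (npdf_cont.comp (continuous_id.sub continuous_const)))).aestronglyMeasurable)
    ?_ ?_ ?_
  · exact ⟨H.1, H.2⟩
  · refine ae_of_all _ fun u c' hc' => ?_
    rw [Real.norm_eq_abs, abs_mul, abs_of_nonneg (gg_nonneg m s K u), abs_mul,
      abs_of_nonneg (npdf_nonneg _)]
    have h1 : |u - c'| * npdf (u - c') ≤ ((u - c')^2 + 1) * npdf (u - c') := by
      have := npdf_nonneg (u - c')
      nlinarith [sq_abs (u - c'), abs_nonneg (u - c'), sq_nonneg (|u - c'| - 1)]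
    have h2 : gg m s K u * (|u - c'| * npdf (u - c'))
        ≤ gg m s K u * (((u - c')^2 + 1) * npdf (u - c')) :=
      mul_le_mul_of_nonneg_left h1 (gg_nonneg m s K u)
    have hcc : |c' - c| ≤ 1 := le_of_lt (by simpa [Real.dist_eq] using hc')
    simpa using h2.trans (master_bound m s hK hcc u)
  · simpa using integrable_master m s c
  · refine ae_of_all _ fun u c' hc' => ?_
    have h1 : HasDerivAt (fun c' : ℝ => u - c') (-1) c' := by
      simpa using (hasDerivAt_id c').const_sub u
    have h2 := (hasDerivAt_npdf (u - c')).comp c' h1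
    have h3 : HasDerivAt (fun c' => npdf (u - c')) ((u - c') * npdf (u - c')) c' := by
      exact h2.congr_deriv (by ring)
    have := h3.const_mul (gg m s K u)
    exact this

lemma hasDerivAt_F1 (m s : ℝ) {K : ℝ} (hK : 0 ≤ K) (c : ℝ) :
    Integrable (fun u => gg m s K u * (((u - c)^2 - 1) * npdf (u - c)))
      ∧ HasDerivAt (F1 m s K) (F2 m s K c) c := by
  have H := hasDerivAt_integral_of_dominated_loc_of_deriv_le
    (F := fun c u => gg m s K u * ((u - c) * npdf (u - c)))
    (F' := fun c u => gg m s K u * (((u - c)^2 - 1) * npdf (u - c)))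
    (x₀ := c) (s := ball c 1)
    (bound := fun u => (Real.sqrt (2*π))⁻¹ * 11 * Real.exp (m + s*u + 3*|u-c|^1 - (u-c)^2/2))
    (ball_mem_nhds c one_pos)
    (Filter.Eventually.of_forall fun c' =>
      ((gg_cont m s K).mul ((continuous_id.sub continuous_const).mul
        (npdf_cont.comp (continuous_id.sub continuous_const)))).aestronglyMeasurable)
    (hasDerivAt_F0 m s hK c).1
    (((gg_cont m s K).mul (((continuous_id.sub continuous_const).pow 2 |>.sub
      continuous_const).mul (npdf_cont.comp (continuous_id.sub continuous_const)))).aestronglyMeasurable)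
    ?_ ?_ ?_
  · exact ⟨H.1, H.2⟩
  · refine ae_of_all _ fun u c' hc' => ?_
    rw [Real.norm_eq_abs, abs_mul, abs_of_nonneg (gg_nonneg m s K u), abs_mul,
      abs_of_nonneg (npdf_nonneg _)]
    have h1 : |(u - c')^2 - 1| * npdf (u - c') ≤ ((u - c')^2 + 1) * npdf (u - c') := by
      have hn := npdf_nonneg (u - c')
      have : |(u - c')^2 - 1| ≤ (u - c')^2 + 1 := by
        rw [abs_le]; constructor <;> nlinarith [sq_nonneg (u - c')]
      exact mul_le_mul_of_nonneg_right this hn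
    have h2 : gg m s K u * (|(u - c')^2 - 1| * npdf (u - c'))
        ≤ gg m s K u * (((u - c')^2 + 1) * npdf (u - c')) :=
      mul_le_mul_of_nonneg_left h1 (gg_nonneg m s K u)
    have hcc : |c' - c| ≤ 1 := le_of_lt (by simpa [Real.dist_eq] using hc')
    simpa using h2.trans (master_bound m s hK hcc u)
  · simpa using integrable_master m s c
  · refine ae_of_all _ fun u c' hc' => ?_
    have h1 : HasDerivAt (fun c' : ℝ => u - c') (-1) c' := by
      simpa using (hasDerivAt_id c').const_sub u
    have h3 : HasDerivAt (fun c' => npdf (u - c')) ((u - c') * npdf (u - c')) c' := by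
      have h2 := (hasDerivAt_npdf (u - c')).comp c' h1
      exact h2.congr_deriv (by ring)
    have h4 := h1.mul h3
    have h5 : HasDerivAt (fun c' => (u - c') * npdf (u - c'))
        (((u - c')^2 - 1) * npdf (u - c')) c' := by
      exact h4.congr_deriv (by ring)
    exact h5.const_mul (gg m s K u)

theorem stmt_19 (X₀ K σ T r : ℝ) (hX₀ : 0 < X₀) (hK : 0 < K) (hσ : 0 < σ)
    (hT : 0 < T) :
    iteratedDeriv 2
      (fun x : ℝ => Real.exp (-r * T) * ∫ z,
        max (x * Real.exp ((r - σ ^ 2 / 2) * T + σ * Real.sqrt T * z) - K) 0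
        ∂(gaussianReal 0 1)) X₀
    = Real.exp (-r * T) * ∫ z,
        max (X₀ * Real.exp ((r - σ ^ 2 / 2) * T + σ * Real.sqrt T * z) - K) 0
          * ((z ^ 2 - 1) / (X₀ ^ 2 * σ ^ 2 * T)
            - z / (X₀ ^ 2 * σ * Real.sqrt T)) ∂(gaussianReal 0 1) := by
  set m : ℝ := (r - σ ^ 2 / 2) * T with hm
  set s : ℝ := σ * Real.sqrt T with hs
  have hsT : 0 < Real.sqrt T := Real.sqrt_pos.mpr hT
  have hs0 : 0 < s := mul_pos hσ hsT
  have hs2 : s^2 = σ^2 * T := by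
    rw [hs, mul_pow, Real.sq_sqrt hT.le]
  -- key fact: for x > 0, max (x * exp (m + s*z) - K) 0 = gg m s K (z + log x / s)
  have hmax : ∀ x : ℝ, 0 < x → ∀ z : ℝ,
      max (x * Real.exp (m + s*z) - K) 0 = gg m s K (z + Real.log x / s) := by
    intro x hx z
    unfold gg
    congr 2
    rw [mul_add, mul_div_cancel₀ _ hs0.ne', Real.exp_add m (s*z + Real.log x),
      Real.exp_add (s*z) (Real.log x), Real.exp_log hx, Real.exp_add m (s*z)]
    ring
  -- Step 1: the function agrees with V on (0, ∞)
  set V : ℝ → ℝ := fun x => Real.exp (-r*T) * F0 m s K (Real.log x / s) with hV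
  have hfV : ∀ x : ℝ, 0 < x →
      Real.exp (-r * T) * (∫ z,
        max (x * Real.exp (m + s*z) - K) 0 ∂(gaussianReal 0 1)) = V x := by
    intro x hx
    rw [integral_gaussian_density]
    congr 1
    calc ∫ z, npdf z * max (x * Real.exp (m + s*z) - K) 0
        = ∫ z, gg m s K (z + Real.log x / s) * npdf ((z + Real.log x / s) - Real.log x / s) := by
          congr 1; ext z; rw [hmax x hx z]; simp [mul_comm]
      _ = F0 m s K (Real.log x / s) := by
          rw [show F0 m s K (Real.log x / s)
              = ∫ u, gg m s K u * npdf (u - Real.log x / s) from rfl]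
          exact integral_add_right_eq_self
            (fun u => gg m s K u * npdf (u - Real.log x / s)) (Real.log x / s)
  have hK0 : (0:ℝ) ≤ K := hK.le
  set c₀ : ℝ := Real.log X₀ / s with hc₀
  have hclog : ∀ x : ℝ, 0 < x → HasDerivAt (fun y : ℝ => Real.log y / s) (x⁻¹ / s) x :=
    fun x hx => (Real.hasDerivAt_log hx.ne').div_const s
  set W : ℝ → ℝ := fun x =>
    Real.exp (-r*T) * (F1 m s K (Real.log x / s) * (x⁻¹ / s)) with hWdef
  have hVderiv : ∀ x : ℝ, 0 < x → HasDerivAt V (W x) x := by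
    intro x hx
    have h1 := ((hasDerivAt_F0 m s hK0 (Real.log x / s)).2.comp x (hclog x hx)).const_mul
      (Real.exp (-r*T))
    exact h1
  have hev : (fun x : ℝ => Real.exp (-r * T) * ∫ z,
      max (x * Real.exp (m + s*z) - K) 0 ∂(gaussianReal 0 1)) =ᶠ[nhds X₀] V :=
    (eventually_gt_nhds hX₀).mono fun x hx => hfV x hx
  have hdev : deriv (fun x : ℝ => Real.exp (-r * T) * ∫ z,
      max (x * Real.exp (m + s*z) - K) 0 ∂(gaussianReal 0 1)) =ᶠ[nhds X₀] W :=
    hev.deriv.trans ((eventually_gt_nhds hX₀).mono fun x hx => (hVderiv x hx).deriv)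
  have hA : HasDerivAt (fun y => F1 m s K (Real.log y / s)) (F2 m s K c₀ * (X₀⁻¹ / s)) X₀ :=
    HasDerivAt.comp X₀ (h₂ := F1 m s K) (hasDerivAt_F1 m s hK0 c₀).2 (hclog X₀ hX₀)
  have hB : HasDerivAt (fun y : ℝ => y⁻¹ / s) (-(X₀^2)⁻¹ / s) X₀ :=
    (hasDerivAt_inv hX₀.ne').div_const s
  have hWd : HasDerivAt W
      (Real.exp (-r*T) * (F2 m s K c₀ * (X₀⁻¹ / s) * (X₀⁻¹ / s)
        + F1 m s K c₀ * (-(X₀^2)⁻¹ / s))) X₀ := by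
    have h2 := (hA.mul hB).const_mul (Real.exp (-r*T))
    exact h2
  have hlhs : iteratedDeriv 2
      (fun x : ℝ => Real.exp (-r * T) * ∫ z,
        max (x * Real.exp (m + s*z) - K) 0 ∂(gaussianReal 0 1)) X₀
      = Real.exp (-r*T) * (F2 m s K c₀ * (X₀⁻¹ / s) * (X₀⁻¹ / s)
        + F1 m s K c₀ * (-(X₀^2)⁻¹ / s)) := by
    rw [show (2:ℕ) = 1 + 1 from rfl, iteratedDeriv_succ, iteratedDeriv_one]
    rw [hdev.deriv_eq]
    exact hWd.deriv
  rw [hlhs, integral_gaussian_density]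
  -- translated integrands
  have hI1 : Integrable (fun z => gg m s K (z + c₀) * (z * npdf z)) := by
    have h := ((hasDerivAt_F0 m s hK0 c₀).1).comp_sub_right (-c₀)
    simpa [sub_neg_eq_add] using h
  have hI2 : Integrable (fun z => gg m s K (z + c₀) * ((z^2 - 1) * npdf z)) := by
    have h := ((hasDerivAt_F1 m s hK0 c₀).1).comp_sub_right (-c₀)
    simpa [sub_neg_eq_add] using h
  have hF1t : F1 m s K c₀ = ∫ z, gg m s K (z + c₀) * (z * npdf z) := by
    rw [show F1 m s K c₀ = ∫ u, gg m s K u * ((u - c₀) * npdf (u - c₀)) from rfl,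
      ← integral_add_right_eq_self (fun u => gg m s K u * ((u - c₀) * npdf (u - c₀))) c₀]
    simp
  have hF2t : F2 m s K c₀ = ∫ z, gg m s K (z + c₀) * (((z:ℝ)^2 - 1) * npdf z) := by
    rw [show F2 m s K c₀ = ∫ u, gg m s K u * (((u - c₀)^2 - 1) * npdf (u - c₀)) from rfl,
      ← integral_add_right_eq_self (fun u => gg m s K u * (((u - c₀)^2 - 1) * npdf (u - c₀))) c₀]
    simp
  -- pointwise identity on the right integrand
  have hpt : ∀ z : ℝ, npdf z *
        (max (X₀ * Real.exp (m + s*z) - K) 0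
          * ((z ^ 2 - 1) / (X₀ ^ 2 * σ ^ 2 * T) - z / (X₀ ^ 2 * σ * Real.sqrt T)))
      = (gg m s K (z + c₀) * ((z^2 - 1) * npdf z)) * ((X₀⁻¹ / s) * (X₀⁻¹ / s))
        + (gg m s K (z + c₀) * (z * npdf z)) * (-(X₀^2)⁻¹ / s) := by
    intro z
    rw [hmax X₀ hX₀ z]
    have hss : s * s = σ^2 * T := by
      rw [hs]
      have : Real.sqrt T * Real.sqrt T = T := Real.mul_self_sqrt hT.le
      nlinarith
    have e1 : (X₀⁻¹ / s) * (X₀⁻¹ / s) = (X₀ ^ 2 * σ ^ 2 * T)⁻¹ := by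
      have h' : X₀ ^ 2 * σ ^ 2 * T = (X₀*s)*(X₀*s) := by linear_combination (-(X₀^2)) * hss
      rw [h']
      simp only [mul_inv]
      ring
    have e2 : (X₀ ^ 2)⁻¹ / s = (X₀ ^ 2 * σ * Real.sqrt T)⁻¹ := by
      rw [hs, division_def, ← mul_inv]
      ring_nf
    rw [e1, neg_div, e2]
    ring
  rw [show (∫ z, npdf z *
        (max (X₀ * Real.exp (m + s*z) - K) 0
          * ((z ^ 2 - 1) / (X₀ ^ 2 * σ ^ 2 * T) - z / (X₀ ^ 2 * σ * Real.sqrt T))))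
      = ∫ z, (gg m s K (z + c₀) * ((z^2 - 1) * npdf z)) * ((X₀⁻¹ / s) * (X₀⁻¹ / s))
        + (gg m s K (z + c₀) * (z * npdf z)) * (-(X₀^2)⁻¹ / s) from by
    congr 1; ext z; exact hpt z]
  rw [integral_add (hI2.mul_const _) (hI1.mul_const _), integral_mul_const, integral_mul_const,
    hF1t, hF2t]
  ring
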